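/- (Gilbert–Varshamov bound) Let Σ be a finite alphabet of size q ≥ 2, let n ≥ 1 and 1 ≤ d ≤ n. Then there exists a code C ⊆ Σ^n whose distinct codewords have pairwise Hamming distance at least d and whose cardinality satisfies |C| ≥ q^n / V_q(n, d-1), where V_q(n, r) := ∑_{i=0}^{r} C(n,i)·(q-1)^i. -/

import Mathlib

open Finset

lemma card_fixed_support {A : Type*} [Fintype A] [DecidableEq A] {n : ℕ}
    (c : Fin n → A) (s : Finset (Fin n)) :
    (univ.filter fun y : Fin n → A => (univ.filter fun j => y j ≠ c j) = s).card
      ≤ (Fintype.card A - 1) ^ s.card := by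
  classical
  have hcard : Fintype.card (∀ j : {x // x ∈ s}, {a : A // a ≠ c j}) =
      (Fintype.card A - 1) ^ s.card := by
    rw [Fintype.card_pi]
    have h1 : ∀ j : {x // x ∈ s}, Fintype.card {a : A // a ≠ c j.1} =
        Fintype.card A - 1 := fun j => by
      simp [Fintype.card_subtype_compl, Fintype.card_subtype_eq]
    simp_rw [h1]
    simp [Finset.prod_const]
  have ht : (univ.filter fun g : {x // x ∈ s} → A => ∀ j : {x // x ∈ s}, g j ≠ c j).card
      = (Fintype.card A - 1) ^ s.card := by
    rw [← Fintype.card_subtype]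
    rw [← hcard]
    exact Fintype.card_congr (Equiv.subtypePiEquivPi (p := fun (j : {x // x ∈ s}) (a : A) => a ≠ c j.1))
  rw [← ht]
  apply Finset.card_le_card_of_injOn (fun y j => y j.1)
  · intro y hy
    simp only [coe_filter, Set.mem_setOf_eq, mem_filter, mem_univ, true_and] at hy ⊢
    intro j
    have : j.1 ∈ univ.filter fun j => y j ≠ c j := by rw [hy]; exact j.2
    simpa using this
  · intro y1 h1 y2 h2 heq
    simp only [coe_filter, Set.mem_setOf_eq, mem_univ, true_and] at h1 h2
    funext j
    by_cases hj : j ∈ s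
    · exact congrFun heq ⟨j, hj⟩
    · have e1 : y1 j = c j := by
        by_contra h
        exact hj (h1 ▸ (by simpa using h : j ∈ univ.filter fun i => y1 i ≠ c i))
      have e2 : y2 j = c j := by
        by_contra h
        exact hj (h2 ▸ (by simpa using h : j ∈ univ.filter fun i => y2 i ≠ c i))
      rw [e1, e2]

lemma card_dist_eq_le {A : Type*} [Fintype A] [DecidableEq A] {n : ℕ}
    (c : Fin n → A) (i : ℕ) :
    (univ.filter fun y : Fin n → A => hammingDist y c = i).card
      ≤ n.choose i * (Fintype.card A - 1) ^ i := by
  classical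
  have hsub : (univ.filter fun y : Fin n → A => hammingDist y c = i) ⊆
      (Finset.powersetCard i (univ : Finset (Fin n))).biUnion
        (fun s => univ.filter fun y : Fin n → A => (univ.filter fun j => y j ≠ c j) = s) := by
    intro y hy
    simp only [mem_filter, mem_univ, true_and] at hy
    refine mem_biUnion.2 ⟨univ.filter fun j => y j ≠ c j, ?_, ?_⟩
    · exact Finset.mem_powersetCard.2 ⟨Finset.subset_univ _, hy⟩
    · simp
  calc (univ.filter fun y : Fin n → A => hammingDist y c = i).card
      ≤ _ := Finset.card_le_card hsub
    _ ≤ ∑ s ∈ Finset.powersetCard i (univ : Finset (Fin n)),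
          (univ.filter fun y : Fin n → A => (univ.filter fun j => y j ≠ c j) = s).card :=
        Finset.card_biUnion_le
    _ ≤ ∑ s ∈ Finset.powersetCard i (univ : Finset (Fin n)), (Fintype.card A - 1) ^ i := by
        apply Finset.sum_le_sum
        intro s hs
        have := card_fixed_support c s
        rwa [(Finset.mem_powersetCard.1 hs).2] at this
    _ = n.choose i * (Fintype.card A - 1) ^ i := by
        rw [Finset.sum_const, Finset.card_powersetCard, Finset.card_univ, Fintype.card_fin,
          smul_eq_mul]

lemma ball_card_le {A : Type*} [Fintype A] [DecidableEq A] {n : ℕ}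
    (c : Fin n → A) (r : ℕ) :
    (univ.filter fun y : Fin n → A => hammingDist y c < r).card
      ≤ ∑ i ∈ Finset.range r, n.choose i * (Fintype.card A - 1) ^ i := by
  classical
  have hsub : (univ.filter fun y : Fin n → A => hammingDist y c < r) ⊆
      (Finset.range r).biUnion
        (fun i => univ.filter fun y : Fin n → A => hammingDist y c = i) := by
    intro y hy
    simp only [mem_filter, mem_univ, true_and] at hy
    exact mem_biUnion.2 ⟨hammingDist y c, Finset.mem_range.2 hy, by simp⟩
  calc (univ.filter fun y : Fin n → A => hammingDist y c < r).card
      ≤ _ := Finset.card_le_card hsub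
    _ ≤ ∑ i ∈ Finset.range r,
          (univ.filter fun y : Fin n → A => hammingDist y c = i).card :=
        Finset.card_biUnion_le
    _ ≤ _ := Finset.sum_le_sum fun i _ => card_dist_eq_le c i

/-- Gilbert–Varshamov bound: over an alphabet of size `q`, there is a code of
length `n` with minimum distance `d` and at least `q^n / V_q(n, d-1)` codewords. -/
theorem gilbert_varshamov (A : Type*) [Fintype A] [DecidableEq A]
    (q n d : ℕ) (hq : Fintype.card A = q) (hq2 : 2 ≤ q)
    (hn : 1 ≤ n) (hd1 : 1 ≤ d) (hdn : d ≤ n) :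
    ∃ C : Finset (Fin n → A),
      (∀ x ∈ C, ∀ y ∈ C, x ≠ y → d ≤ hammingDist x y) ∧
      (q : ℝ) ^ n / (∑ i ∈ Finset.range d, (n.choose i : ℝ) * ((q : ℝ) - 1) ^ i)
        ≤ C.card := by
  classical
  set P : Finset (Fin n → A) → Prop :=
    fun C => ∀ x ∈ C, ∀ y ∈ C, x ≠ y → d ≤ hammingDist x y with hP
  have hne : (univ.filter P).Nonempty :=
    ⟨∅, by simp [P]⟩
  obtain ⟨C, hCmem, hmax⟩ := Finset.exists_max_image (univ.filter P) Finset.card hne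
  have hC : P C := (Finset.mem_filter.1 hCmem).2
  refine ⟨C, hC, ?_⟩
  -- covering property
  have hcov : ∀ x : Fin n → A, ∃ c ∈ C, hammingDist x c < d := by
    intro x
    by_contra hcon
    push_neg at hcon
    have hx : x ∉ C := fun hx => by
      have := hcon x hx
      simp at this
      omega
    have hins : P (insert x C) := by
      intro a ha b hb hab
      rcases Finset.mem_insert.1 ha with ha' | ha' <;>
        rcases Finset.mem_insert.1 hb with hb' | hb'
      · exact absurd (ha'.trans hb'.symm) hab
      · subst ha'; exact hcon b hb'
      · subst hb'; rw [hammingDist_comm]; exact hcon a ha'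
      · exact hC a ha' b hb' hab
    have hle := hmax (insert x C) (Finset.mem_filter.2 ⟨Finset.mem_univ _, hins⟩)
    rw [Finset.card_insert_of_notMem hx] at hle
    omega
  -- counting
  set V : ℕ := ∑ i ∈ Finset.range d, n.choose i * (q - 1) ^ i with hV
  have hcount : q ^ n ≤ C.card * V := by
    have hsub : (univ : Finset (Fin n → A)) ⊆
        C.biUnion (fun c => univ.filter fun y => hammingDist y c < d) := by
      intro x _
      obtain ⟨c, hc, hlt⟩ := hcov x
      exact mem_biUnion.2 ⟨c, hc, by simp [hlt]⟩
    calc q ^ n = (univ : Finset (Fin n → A)).card := by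
          rw [Finset.card_univ, Fintype.card_fun, hq, Fintype.card_fin]
      _ ≤ _ := Finset.card_le_card hsub
      _ ≤ ∑ c ∈ C, (univ.filter fun y => hammingDist y c < d).card :=
          Finset.card_biUnion_le
      _ ≤ ∑ c ∈ C, V := by
          apply Finset.sum_le_sum
          intro c _
          have := ball_card_le c d
          rwa [hq] at this
      _ = C.card * V := by rw [Finset.sum_const, smul_eq_mul]
  -- pass to reals
  have hVcast : (∑ i ∈ Finset.range d, (n.choose i : ℝ) * ((q : ℝ) - 1) ^ i) = (V : ℝ) := by
    rw [hV, Nat.cast_sum]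
    apply Finset.sum_congr rfl
    intro i _
    rw [Nat.cast_mul, Nat.cast_pow, Nat.cast_sub (by omega : 1 ≤ q), Nat.cast_one]
  have hVpos : 0 < (V : ℝ) := by
    have : 1 ≤ V := by
      rw [hV]
      calc 1 = n.choose 0 * (q - 1) ^ 0 := by simp
        _ ≤ _ := Finset.single_le_sum (f := fun i => n.choose i * (q - 1) ^ i)
              (fun i _ => Nat.zero_le _) (Finset.mem_range.2 hd1)
    exact_mod_cast Nat.lt_of_lt_of_le Nat.zero_lt_one this
  rw [hVcast, div_le_iff₀ hVpos]
  have := hcount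
  calc (q : ℝ) ^ n = ((q ^ n : ℕ) : ℝ) := by push_cast; ring
    _ ≤ ((C.card * V : ℕ) : ℝ) := by exact_mod_cast hcount
    _ = C.card * V := by push_cast; ring
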